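/- arXiv:1009.3866 — 8 statements merged into one kernel-verified Lean document; each statement's English description precedes it below -/
import Mathlib

section
/- Let G be a finite group and let H, K be proper subgroups of G such that {H^g, K : g ∈ G} is a covering of G, i.e. G is the set-theoretic union of K and of all the G-conjugates H^g of H. Then the normal closure of H in G equals G, and the normal core of H in G is contained in K. -/
open MulAction in
/-- In a finite group, some element lies in no conjugate of a proper subgroup. -/
lemma aux_exists_not_conj {G : Type*} [Group G] [Finite G] (H : Subgroup G)
    (hH : H ≠ ⊤) : ∃ x : G, ∀ g : G, g * x * g⁻¹ ∉ H := by
  classical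
  cases nonempty_fintype G
  by_contra hcon
  push_neg at hcon
  -- every x has a fixed point on G ⧸ H
  have hfix : ∀ x : G, 0 < Fintype.card (fixedBy (G ⧸ H) x) := by
    intro x
    obtain ⟨g, hg⟩ := hcon x
    refine Fintype.card_pos_iff.mpr ⟨⟨QuotientGroup.mk g⁻¹, ?_⟩⟩
    show x • (QuotientGroup.mk g⁻¹ : G ⧸ H) = QuotientGroup.mk g⁻¹
    rw [MulAction.Quotient.smul_mk, QuotientGroup.eq]
    simpa [mul_assoc, mul_inv_rev] using H.inv_mem hg
  have h1 : Fintype.card (fixedBy (G ⧸ H) (1 : G)) = H.index := by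
    rw [Subgroup.index_eq_card, Nat.card_eq_fintype_card]
    exact Fintype.card_congr (Equiv.subtypeUnivEquiv (fun q => one_smul G q))
  have hindex : 1 < H.index := H.one_lt_index_of_ne_top hH
  have horb : Fintype.card (orbitRel.Quotient G (G ⧸ H)) = 1 := by
    have : Subsingleton (orbitRel.Quotient G (G ⧸ H)) :=
      (pretransitive_iff_subsingleton_quotient G (G ⧸ H)).mp inferInstance
    have : Nonempty (orbitRel.Quotient G (G ⧸ H)) :=
      (nonempty_quotient_iff _).mpr inferInstance
    exact Fintype.card_eq_one_iff.mpr ⟨Classical.arbitrary _, fun b => Subsingleton.elim _ _⟩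
  have hsum := sum_card_fixedBy_eq_card_orbits_mul_card_group G (G ⧸ H)
  rw [horb, one_mul] at hsum
  -- lower bound on the sum
  have hge : Fintype.card G + 1 ≤ ∑ a : G, Fintype.card (fixedBy (G ⧸ H) a) := by
    have h2 : ∑ a ∈ (Finset.univ.erase (1 : G)), Fintype.card (fixedBy (G ⧸ H) a)
        ≥ ∑ _a ∈ (Finset.univ.erase (1 : G)), 1 :=
      Finset.sum_le_sum fun a _ => hfix a
    have hsplit := Finset.add_sum_erase Finset.univ
      (fun a : G => Fintype.card (fixedBy (G ⧸ H) a)) (Finset.mem_univ 1)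
    rw [← hsplit]
    beta_reduce
    rw [h1]
    have : (Finset.univ.erase (1 : G)).card = Fintype.card G - 1 := by
      rw [Finset.card_erase_of_mem (Finset.mem_univ 1), Finset.card_univ]
    have hcardpos : 1 ≤ Fintype.card G := Fintype.card_pos
    simp only [Finset.sum_const, smul_eq_mul, mul_one] at h2
    rw [this] at h2
    omega
  omega

/-- If `{H^g, K : g ∈ G}` covers the finite group `G` (with `H`, `K` proper subgroups),
then the normal closure of `H` is `G` and the normal core of `H` is contained in `K`. -/
theorem stmt_0 {G : Type*} [Group G] [Finite G] (H K : Subgroup G)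
    (hH : H ≠ ⊤) (hK : K ≠ ⊤)
    (hcov : ∀ x : G, x ∈ K ∨ ∃ g : G, g * x * g⁻¹ ∈ H) :
    Subgroup.normalClosure (H : Set G) = ⊤ ∧ H.normalCore ≤ K := by
  constructor
  · -- normal closure is everything: otherwise G = K ∪ N, union of two proper subgroups
    by_contra hN
    set N := Subgroup.normalClosure (H : Set G) with hNdef
    have hmem : ∀ x : G, x ∈ K ∨ x ∈ N := by
      intro x
      rcases hcov x with hx | ⟨g, hg⟩
      · exact Or.inl hx
      · right
        have : g * x * g⁻¹ ∈ N := Subgroup.subset_normalClosure hg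
        have hc : g⁻¹ * (g * x * g⁻¹) * g ∈ N := by
          have : Subgroup.Normal N := Subgroup.normalClosure_normal
          simpa using this.conj_mem _ ‹g * x * g⁻¹ ∈ N› g⁻¹
        simpa [mul_assoc] using hc
    obtain ⟨k, hk⟩ : ∃ k : G, k ∉ N := by
      by_contra hall
      push_neg at hall
      exact hN (Subgroup.eq_top_iff' N |>.mpr hall)
    obtain ⟨n, hn⟩ : ∃ n : G, n ∉ K := by
      by_contra hall
      push_neg at hall
      exact hK (Subgroup.eq_top_iff' K |>.mpr hall)
    have hkK : k ∈ K := (hmem k).resolve_right hk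
    have hnN : n ∈ N := (hmem n).resolve_left hn
    rcases hmem (k * n) with hKn | hNn
    · exact hn (by simpa using K.mul_mem (K.inv_mem hkK) hKn)
    · exact hk (by simpa using N.mul_mem hNn (N.inv_mem hnN))
  · -- normal core ≤ K
    intro c hc
    by_contra hcK
    obtain ⟨x, hx⟩ := aux_exists_not_conj H hH
    have hxK : x ∈ K := by
      rcases hcov x with h | ⟨g, hg⟩
      · exact h
      · exact absurd hg (hx g)
    rcases hcov (x * c) with h | ⟨g, hg⟩
    · exact hcK (by simpa using K.mul_mem (K.inv_mem hxK) h)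
    · -- g x c g⁻¹ ∈ H and g c g⁻¹ ∈ H (core), so g x g⁻¹ ∈ H, contradiction
      have hcH : g * c * g⁻¹ ∈ H :=
        H.normalCore_le ((H.normalCore_normal).conj_mem c hc g)
      have : g * x * g⁻¹ ∈ H := by
        have h2 : (g * (x * c) * g⁻¹) * (g * c * g⁻¹)⁻¹ ∈ H := H.mul_mem hg (H.inv_mem hcH)
        have : (g * (x * c) * g⁻¹) * (g * c * g⁻¹)⁻¹ = g * x * g⁻¹ := by group
        rwa [this] at h2
      exact hx g this
end

section
/- Let G be a finite group and let H, K be proper subgroups of G such that G = K ∪ ⋃_{g∈G} H^g. If K is normal in G, then G = KH. -/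
/-- A finite group is not the union of conjugates of a proper subgroup. -/
theorem aux_conj_cover_eq_top {Q : Type*} [Group Q] [Finite Q] (H : Subgroup Q)
    (hc : ∀ x : Q, ∃ g : Q, g * x * g⁻¹ ∈ H) : H = ⊤ := by
  classical
  cases nonempty_fintype Q
  -- For each left coset `c : Q ⧸ H`, the conjugate subgroup `(out c) H (out c)⁻¹` as a finset
  set F : Q ⧸ H → Finset Q :=
    fun c => Finset.univ.filter (fun x => c.out⁻¹ * x * c.out ∈ H) with hF
  -- every element lies in some `F c`
  have hcover : ∀ x : Q, ∃ c : Q ⧸ H, x ∈ F c := by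
    intro x
    obtain ⟨g, hg⟩ := hc x
    refine ⟨QuotientGroup.mk g⁻¹, ?_⟩
    have hout : QuotientGroup.mk ((QuotientGroup.mk g⁻¹ : Q ⧸ H).out) =
        (QuotientGroup.mk g⁻¹ : Q ⧸ H) := Quotient.out_eq _
    set t := (QuotientGroup.mk g⁻¹ : Q ⧸ H).out with ht
    have hmem : g * t ∈ H := by
      have := QuotientGroup.eq.mp hout.symm
      simpa using this
    have : t⁻¹ * x * t ∈ H := by
      have h1 : t⁻¹ * x * t = (g * t)⁻¹ * (g * x * g⁻¹) * (g * t) := by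
        group
      rw [h1]
      exact H.mul_mem (H.mul_mem (H.inv_mem hmem) hg) hmem
    simp only [hF, Finset.mem_filter, Finset.mem_univ, true_and]; exact this
  -- each `F c` has `#H` elements and contains `1`
  have hcardF : ∀ c : Q ⧸ H, (F c).card = Fintype.card H := by
    intro c
    rw [← Fintype.card_coe]
    apply Fintype.card_congr
    refine Equiv.symm ⟨fun h => ⟨c.out * (h : Q) * c.out⁻¹, by
        simp only [hF, Finset.mem_filter, Finset.mem_univ, true_and]
        have : c.out⁻¹ * (c.out * (h : Q) * c.out⁻¹) * c.out = (h : Q) := by group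
        rw [this]; exact h.2⟩,
      fun x => ⟨c.out⁻¹ * (x : Q) * c.out, by
        have := x.2
        simp only [hF, Finset.mem_filter, Finset.mem_univ, true_and] at this
        exact this⟩, fun h => by ext; group, fun x => by ext; group⟩
  have hone : ∀ c : Q ⧸ H, (1 : Q) ∈ F c := by
    intro c; simp [hF, H.one_mem]
  -- counting
  have hsub : (Finset.univ : Finset Q).erase 1 ⊆
      Finset.univ.biUnion (fun c : Q ⧸ H => (F c).erase 1) := by
    intro x hx
    obtain ⟨c, hc'⟩ := hcover x
    refine Finset.mem_biUnion.mpr ⟨c, Finset.mem_univ _, ?_⟩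
    exact Finset.mem_erase.mpr ⟨(Finset.mem_erase.mp hx).1, hc'⟩
  have hcount : Fintype.card Q - 1 ≤
      Fintype.card (Q ⧸ H) * (Fintype.card H - 1) := by
    calc Fintype.card Q - 1 = ((Finset.univ : Finset Q).erase 1).card := by
          rw [Finset.card_erase_of_mem (Finset.mem_univ _), Finset.card_univ]
      _ ≤ (Finset.univ.biUnion (fun c : Q ⧸ H => (F c).erase 1)).card :=
          Finset.card_le_card hsub
      _ ≤ ∑ c : Q ⧸ H, ((F c).erase 1).card := Finset.card_biUnion_le
      _ = ∑ c : Q ⧸ H, (Fintype.card H - 1) := by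
          refine Finset.sum_congr rfl fun c _ => ?_
          rw [Finset.card_erase_of_mem (hone c), hcardF c]
      _ = Fintype.card (Q ⧸ H) * (Fintype.card H - 1) := by
          rw [Finset.sum_const, Finset.card_univ, smul_eq_mul]
  -- conclude index = 1
  have hmul := Subgroup.card_eq_card_quotient_mul_card_subgroup H
  simp only [Nat.card_eq_fintype_card] at hmul
  have hQpos : 0 < Fintype.card Q := Fintype.card_pos
  have hHpos : 0 < Fintype.card H := Fintype.card_pos
  have hkey : Fintype.card (Q ⧸ H) * (Fintype.card H - 1)
      = Fintype.card (Q ⧸ H) * Fintype.card H - Fintype.card (Q ⧸ H) := by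
    rw [Nat.mul_sub, mul_one]
  have hle : Fintype.card (Q ⧸ H) ≤ Fintype.card (Q ⧸ H) * Fintype.card H :=
    Nat.le_mul_of_pos_right _ hHpos
  have hidx : Fintype.card (Q ⧸ H) ≤ 1 := by
    rw [hkey] at hcount
    omega
  have : H.index = 1 := by
    have : H.index = Fintype.card (Q ⧸ H) := by
      rw [Subgroup.index, Nat.card_eq_fintype_card]
    have hpos : 0 < Fintype.card (Q ⧸ H) := Fintype.card_pos
    omega
  exact Subgroup.index_eq_one.mp this

/-- If `G = K ∪ ⋃_{g∈G} H^g` with `H`, `K` proper subgroups of a finite group `G`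
and `K` is normal in `G`, then `G = KH`. -/
theorem stmt_1 {G : Type*} [Group G] [Finite G] (H K : Subgroup G)
    (hH : H ≠ ⊤) (hK : K ≠ ⊤) [K.Normal]
    (hcov : ∀ x : G, x ∈ K ∨ ∃ g : G, g * x * g⁻¹ ∈ H) :
    ∀ x : G, ∃ k ∈ K, ∃ h ∈ H, x = k * h := by
  set π := QuotientGroup.mk' K
  have htop : H.map π = ⊤ := by
    apply aux_conj_cover_eq_top
    intro q
    obtain ⟨x, rfl⟩ := QuotientGroup.mk'_surjective K q
    rcases hcov x with hx | ⟨g, hg⟩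
    · refine ⟨1, ?_⟩
      have h1 : π x = 1 := (QuotientGroup.eq_one_iff x).mpr hx
      simp only [h1, one_mul, mul_one, inv_one]
      exact Subgroup.mem_map.mpr ⟨1, H.one_mem, (map_one π).trans h1.symm⟩
    · refine ⟨π g, ?_⟩
      have : π g * π x * (π g)⁻¹ = π (g * x * g⁻¹) := by
        simp [map_mul, map_inv]
      rw [this]
      exact Subgroup.mem_map.mpr ⟨g * x * g⁻¹, hg, rfl⟩
  intro x
  have : π x ∈ H.map π := htop ▸ Subgroup.mem_top _
  obtain ⟨h, hh, hhx⟩ := Subgroup.mem_map.mp this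
  have hk : h⁻¹ * x ∈ K := QuotientGroup.eq.mp hhx
  have hk' : x * h⁻¹ ∈ K := by
    have := ‹K.Normal›.conj_mem _ hk h
    simpa [mul_assoc] using this
  exact ⟨x * h⁻¹, hk', h, hh, by group⟩
end

section
/- Let G be a finite group and let H, K be proper subgroups of G such that G = K ∪ ⋃_{g∈G} H^g. Then also G = K_G ∪ ⋃_{g∈G} H^g, where K_G is the normal core of K in G; moreover K_G is a proper subgroup of G. -/
/-- If `G = K ∪ ⋃_{g∈G} H^g` with `H`, `K` proper subgroups of a finite group `G`,
then also `G = K_G ∪ ⋃_{g∈G} H^g` where `K_G` is the normal core of `K`,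
and `K_G` is a proper subgroup of `G`. -/
theorem stmt_2 {G : Type*} [Group G] [Finite G] (H K : Subgroup G)
    (hH : H ≠ ⊤) (hK : K ≠ ⊤)
    (hcov : ∀ x : G, x ∈ K ∨ ∃ g : G, g * x * g⁻¹ ∈ H) :
    (∀ x : G, x ∈ K.normalCore ∨ ∃ g : G, g * x * g⁻¹ ∈ H) ∧ K.normalCore ≠ ⊤ := by
  constructor
  · intro x
    by_cases hx : ∃ g : G, g * x * g⁻¹ ∈ H
    · exact Or.inr hx
    · left
      intro b
      rcases hcov (b * x * b⁻¹) with h | ⟨g, hg⟩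
      · exact h
      · exact absurd ⟨g * b, by simpa [mul_assoc] using hg⟩ hx
  · intro h
    exact hK (top_le_iff.mp (h ▸ K.normalCore_le))
end

section
/- Let G be a finite group and let H, K be proper subgroups of G with G = K ∪ ⋃_{g∈G} H^g. Then (G, H, H ∩ K_G) is a Frobenius–Wielandt group, where K_G is the normal core of K in G; in particular H is self-normalizing in G (N_G(H) = H) and H ∩ H^g ≤ H ∩ K_G for every g ∈ G − H. -/
open Finset

lemma aux_card_ineq {G : Type*} [Group G] [Finite G] (H N : Subgroup G) [N.Normal] :
    Nat.card N * Nat.card H ≤ Nat.card G * Nat.card (H ⊓ N : Subgroup G) := by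
  have hdvd : N.relIndex H ∣ N.index := by
    refine ⟨(N ⊔ H).index, ?_⟩
    rw [← Subgroup.relIndex_sup_left, Subgroup.relIndex_mul_index le_sup_left]
  have hipos : 0 < N.index := Nat.pos_of_ne_zero Subgroup.index_ne_zero_of_finite
  have hr : N.relIndex H ≤ N.index := Nat.le_of_dvd hipos hdvd
  have hHpos : 0 < H.index := Nat.pos_of_ne_zero Subgroup.index_ne_zero_of_finite
  have h3 : Nat.card (H ⊓ N : Subgroup G) * N.relIndex H = Nat.card H := by
    have e1 : (N ⊓ H).relIndex H = N.relIndex H := Subgroup.inf_relIndex_right N H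
    have e2 : (N ⊓ H).relIndex H * H.index = (N ⊓ H).index :=
      Subgroup.relIndex_mul_index inf_le_right
    have e3 : Nat.card (N ⊓ H : Subgroup G) * (N ⊓ H).index = Nat.card G :=
      (N ⊓ H).card_mul_index
    have e4 : Nat.card H * H.index = Nat.card G := H.card_mul_index
    have e5 : (Nat.card (N ⊓ H : Subgroup G) * (N ⊓ H).relIndex H) * H.index
        = Nat.card H * H.index := by rw [mul_assoc, e2, e3, e4]
    have e6 := Nat.eq_of_mul_eq_mul_right hHpos e5
    have e7 : (H ⊓ N : Subgroup G) = (N ⊓ H : Subgroup G) := inf_comm H N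
    rw [e7]
    rwa [e1] at e6
  calc Nat.card N * Nat.card H
      = Nat.card N * (Nat.card (H ⊓ N : Subgroup G) * N.relIndex H) := by rw [h3]
    _ ≤ Nat.card N * (Nat.card (H ⊓ N : Subgroup G) * N.index) :=
        Nat.mul_le_mul_left _ (Nat.mul_le_mul_left _ hr)
    _ = Nat.card G * Nat.card (H ⊓ N : Subgroup G) := by
        rw [← mul_assoc, mul_comm (Nat.card N), mul_assoc, Subgroup.card_mul_index, mul_comm]

lemma aux_key {G : Type*} [Group G] [Finite G] (H N : Subgroup G) [N.Normal]
    (cov : ∀ x : G, x ∈ N ∨ ∃ g : G, g * x * g⁻¹ ∈ H)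
    {x : G} (hx : x ∉ N) {a b : G} (ha : a⁻¹ * x * a ∈ H) (hb : b⁻¹ * x * b ∈ H) :
    a⁻¹ * b ∈ H := by
  classical
  by_contra hab
  cases nonempty_fintype G
  set HF : Finset G := univ.filter (· ∈ H) with hHF
  set A : Finset G := univ.filter (· ∉ N) with hA
  set T : G → Finset G := fun y => univ.filter (fun g => g⁻¹ * y * g ∈ H) with hT
  set NF : Finset G := univ.filter (· ∈ N) with hNF
  set IF : Finset G := univ.filter (fun y => y ∈ H ∧ y ∈ N) with hIF
  set CF : Finset G := univ.filter (fun y => y ∈ H ∧ y ∉ N) with hCF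
  -- cardinalities vs Nat.card
  have cardHF : HF.card = Nat.card H := by
    rw [Nat.card_eq_fintype_card, Fintype.card_subtype]
  have cardNF : NF.card = Nat.card N := by
    rw [Nat.card_eq_fintype_card, Fintype.card_subtype]
  have cardIF : IF.card = Nat.card (H ⊓ N : Subgroup G) := by
    rw [Nat.card_eq_fintype_card, Fintype.card_subtype]
    congr 1
    apply filter_congr
    intro y _
    simp [Subgroup.mem_inf]
  -- conjugation preserves N-membership
  have hconjN : ∀ (g y : G), g * y * g⁻¹ ∈ N ↔ y ∈ N := by
    intro g y
    constructor
    · intro h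
      have := (‹N.Normal›).conj_mem _ h g⁻¹
      simpa [mul_assoc] using this
    · intro h
      exact (‹N.Normal›).conj_mem _ h g
  -- per-g count
  have perg : ∀ g : G, (A.filter (fun y => g⁻¹ * y * g ∈ H)).card = CF.card := by
    intro g
    refine Finset.card_nbij' (fun y => g⁻¹ * y * g) (fun y => g * y * g⁻¹) ?_ ?_ ?_ ?_
    · intro y hy
      simp only [hA, hCF, mem_coe, mem_filter, mem_univ, true_and] at hy ⊢
      refine ⟨hy.2, fun hn => hy.1 ?_⟩
      have : g * (g⁻¹ * y * g) * g⁻¹ ∈ N := ((‹N.Normal›).conj_mem _ hn g)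
      simpa [mul_assoc] using this
    · intro y hy
      simp only [hA, hCF, mem_coe, mem_filter, mem_univ, true_and] at hy ⊢
      constructor
      · intro hn
        exact hy.2 ((hconjN g y).mp hn)
      · have : g⁻¹ * (g * y * g⁻¹) * g = y := by group
        rw [this]
        exact hy.1
    · intro y _; group
    · intro y _; group
  -- double counting
  have dcount : ∑ y ∈ A, (T y).card = Fintype.card G * CF.card := by
    have e1 : ∑ y ∈ A, (T y).card
        = ∑ y ∈ A, ∑ g ∈ univ, (if g⁻¹ * y * g ∈ H then 1 else 0) := by
      refine Finset.sum_congr rfl (fun y _ => ?_)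
      rw [hT]
      exact Finset.card_filter _ _
    rw [e1, Finset.sum_comm]
    have e2 : ∀ g : G, ∑ y ∈ A, (if g⁻¹ * y * g ∈ H then 1 else 0)
        = (A.filter (fun y => g⁻¹ * y * g ∈ H)).card := by
      intro g; rw [Finset.card_filter]
    calc ∑ g ∈ univ, ∑ y ∈ A, (if g⁻¹ * y * g ∈ H then 1 else 0)
        = ∑ g ∈ (univ : Finset G), CF.card := by
          refine Finset.sum_congr rfl (fun g _ => ?_)
          rw [e2 g, perg g]
      _ = Fintype.card G * CF.card := by rw [Finset.sum_const, smul_eq_mul, card_univ]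
  -- partitions
  have part1 : NF.card + A.card = Fintype.card G := by
    have := Finset.card_filter_add_card_filter_not
      (s := (univ : Finset G)) (p := (· ∈ N))
    simpa [hNF, hA, card_univ] using this
  have part2 : IF.card + CF.card = HF.card := by
    have := Finset.card_filter_add_card_filter_not
      (s := HF) (p := (· ∈ N))
    rw [hHF] at this
    simpa [Finset.filter_filter, hIF, hCF, hHF, and_comm] using this
  -- the main inequality : Fintype.card G * CF.card ≤ A.card * HF.card
  have hineq : Fintype.card G * CF.card ≤ A.card * HF.card := by
    have key := aux_card_ineq H N
    rw [← cardHF, ← cardNF, ← cardIF, Nat.card_eq_fintype_card] at key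
    have e1 : Fintype.card G * CF.card + Fintype.card G * IF.card
        = Fintype.card G * HF.card := by
      rw [← Nat.mul_add, Nat.add_comm, part2]
    have e2 : A.card * HF.card + NF.card * HF.card = Fintype.card G * HF.card := by
      rw [← Nat.add_mul, Nat.add_comm, part1]
    have : Fintype.card G * CF.card + Fintype.card G * IF.card
        ≤ A.card * HF.card + Fintype.card G * IF.card := by
      rw [e1, ← e2]
      exact Nat.add_le_add_left key _
    exact Nat.le_of_add_le_add_right this
  -- lower bound for each y ∈ A
  have hlow : ∀ y ∈ A, HF.card ≤ (T y).card := by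
    intro y hy
    rw [hA, mem_filter] at hy
    rcases cov y with hN1 | ⟨g, hg⟩
    · exact absurd hN1 hy.2
    · have hg' : (g⁻¹)⁻¹ * y * g⁻¹ ∈ H := by simpa [mul_assoc] using hg
      refine Finset.card_le_card_of_injOn (fun h => g⁻¹ * h) ?_ ?_
      · intro h hh
        simp only [hHF, mem_coe, mem_filter] at hh
        rw [hT]
        simp only [mem_coe, mem_filter, mem_univ, true_and]
        have : (g⁻¹ * h)⁻¹ * y * (g⁻¹ * h) = h⁻¹ * ((g⁻¹)⁻¹ * y * g⁻¹) * h := by group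
        rw [this]
        exact H.mul_mem (H.mul_mem (H.inv_mem hh.2) hg') hh.2
      · intro u _ v _ huv
        exact mul_left_cancel huv
  -- big bound at x : two disjoint cosets inside T x
  have hxA : x ∈ A := by rw [hA, mem_filter]; exact ⟨mem_univ x, hx⟩
  have hbig : 2 * HF.card ≤ (T x).card := by
    set Sa : Finset G := HF.image (fun h => a * h) with hSa
    set Sb : Finset G := HF.image (fun h => b * h) with hSb
    have hsub : ∀ (c : G), c⁻¹ * x * c ∈ H → HF.image (fun h => c * h) ⊆ T x := by
      intro c hc
      intro z hz
      rw [mem_image] at hz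
      obtain ⟨h, hh, rfl⟩ := hz
      rw [hHF, mem_filter] at hh
      rw [hT]
      simp only [mem_filter, mem_univ, true_and]
      have : (c * h)⁻¹ * x * (c * h) = h⁻¹ * (c⁻¹ * x * c) * h := by group
      rw [this]
      exact H.mul_mem (H.mul_mem (H.inv_mem hh.2) hc) hh.2
    have hdisj : Disjoint Sa Sb := by
      rw [Finset.disjoint_left]
      intro z hza hzb
      rw [hSa, mem_image] at hza
      rw [hSb, mem_image] at hzb
      obtain ⟨h1, hh1, rfl⟩ := hza
      obtain ⟨h2, hh2, he⟩ := hzb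
      rw [hHF, mem_filter] at hh1 hh2
      apply hab
      have : a⁻¹ * b = h1 * h2⁻¹ := by
        calc a⁻¹ * b = a⁻¹ * (b * h2) * h2⁻¹ := by group
          _ = a⁻¹ * (a * h1) * h2⁻¹ := by rw [he]
          _ = h1 * h2⁻¹ := by group
      rw [this]
      exact H.mul_mem hh1.2 (H.inv_mem hh2.2)
    have hcardA : Sa.card = HF.card :=
      Finset.card_image_of_injective _ (fun u v => mul_left_cancel)
    have hcardB : Sb.card = HF.card :=
      Finset.card_image_of_injective _ (fun u v => mul_left_cancel)
    have hcup : (Sa ∪ Sb).card = 2 * HF.card := by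
      rw [Finset.card_union_of_disjoint hdisj, hcardA, hcardB]; ring
    rw [← hcup]
    exact Finset.card_le_card (Finset.union_subset (hsub a ha) (hsub b hb))
  -- combine
  have hsum1 : ∑ y ∈ A, (T y).card ≤ A.card * HF.card :=
    le_trans (le_of_eq dcount) hineq
  have hHFpos : 1 ≤ HF.card := by
    refine Finset.card_pos.mpr ⟨1, ?_⟩
    rw [hHF, mem_filter]
    exact ⟨mem_univ 1, H.one_mem⟩
  have hsum2 : (A.erase x).card * HF.card + 2 * HF.card ≤ ∑ y ∈ A, (T y).card := by
    rw [← Finset.sum_erase_add A _ hxA]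
    refine Nat.add_le_add ?_ hbig
    have := Finset.card_nsmul_le_sum (A.erase x) (fun y => (T y).card) HF.card
      (fun y hy => hlow y (Finset.mem_of_mem_erase hy))
    simpa [smul_eq_mul] using this
  have hcerase : (A.erase x).card = A.card - 1 := Finset.card_erase_of_mem hxA
  have hApos : 1 ≤ A.card := Finset.card_pos.mpr ⟨x, hxA⟩
  obtain ⟨m, hm⟩ : ∃ m, A.card = m + 1 := ⟨A.card - 1, by omega⟩
  rw [hcerase, hm] at hsum2
  rw [hm] at hsum1
  have : (m + 1 - 1) * HF.card + 2 * HF.card ≤ (m + 1) * HF.card :=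
    le_trans hsum2 hsum1
  simp only [Nat.add_sub_cancel] at this
  nlinarith [hHFpos]

/-- If `G = K ∪ ⋃_{g∈G} H^g` with `H`, `K` proper subgroups of the finite group `G`,
then `(G, H, H ∩ K_G)` is a Frobenius–Wielandt group, where `K_G` is the normal core of `K`;
in particular `H` is self-normalizing and `H ∩ H^g ≤ H ∩ K_G` for every `g ∈ G − H`. -/
theorem stmt_5 {G : Type*} [Group G] [Finite G] (H K : Subgroup G)
    (hH : H ≠ ⊤) (hK : K ≠ ⊤)
    (hcov : ∀ x : G, x ∈ K ∨ ∃ g : G, g * x * g⁻¹ ∈ H) :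
    H ≠ ⊥ ∧ H ≠ ⊤ ∧ H ⊓ K.normalCore < H ∧
      (∀ h ∈ H, ∀ x ∈ H ⊓ K.normalCore, h * x * h⁻¹ ∈ H ⊓ K.normalCore) ∧
      Subgroup.normalizer (H : Set G) = H ∧
      (∀ g : G, g ∉ H → ∀ x ∈ H, g * x * g⁻¹ ∈ H → x ∈ H ⊓ K.normalCore) := by
  classical
  set N := K.normalCore with hN
  have hNnorm : N.Normal := K.normalCore_normal
  have hNleK : N ≤ K := K.normalCore_le
  -- covering with N instead of K
  have cov : ∀ x : G, x ∈ N ∨ ∃ g : G, g * x * g⁻¹ ∈ H := by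
    intro x
    by_cases hc : ∃ g : G, g * x * g⁻¹ ∈ H
    · exact Or.inr hc
    · left
      show ∀ b : G, b * x * b⁻¹ ∈ K
      intro b
      rcases hcov (b * x * b⁻¹) with h1 | ⟨g, hg⟩
      · exact h1
      · exfalso
        apply hc
        refine ⟨g * b, ?_⟩
        have : (g * b) * x * (g * b)⁻¹ = g * (b * x * b⁻¹) * g⁻¹ := by group
        rw [this]
        exact hg
  -- H is nontrivial
  have hbot : H ≠ ⊥ := by
    intro h
    apply hK
    rw [Subgroup.eq_top_iff']
    intro x
    rcases hcov x with h1 | ⟨g, hg⟩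
    · exact h1
    · rw [h, Subgroup.mem_bot] at hg
      have hx1 : x = 1 := by
        have : x = g⁻¹ * (g * x * g⁻¹) * g := by group
        rw [this, hg]
        group
      rw [hx1]
      exact K.one_mem
  -- H is not contained in N
  have hnotle : ¬ H ≤ N := by
    intro hle
    apply hK
    rw [Subgroup.eq_top_iff']
    intro x
    rcases cov x with h1 | ⟨g, hg⟩
    · exact hNleK h1
    · have h2 : g * x * g⁻¹ ∈ N := hle hg
      have h3 : x ∈ N := by
        have := hNnorm.conj_mem _ h2 g⁻¹
        have e : g⁻¹ * (g * x * g⁻¹) * g⁻¹⁻¹ = x := by group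
        rwa [e] at this
      exact hNleK h3
  obtain ⟨x₀, hx₀H, hx₀N⟩ := SetLike.not_le_iff_exists.mp hnotle
  -- the key consequence
  have key : ∀ x : G, x ∉ N → ∀ a b : G, a⁻¹ * x * a ∈ H → b⁻¹ * x * b ∈ H → a⁻¹ * b ∈ H :=
    fun x hx a b ha hb => aux_key H N cov hx ha hb
  refine ⟨hbot, hH, ?_, ?_, ?_, ?_⟩
  · -- H ⊓ N < H
    refine lt_of_le_of_ne inf_le_left (fun h => ?_)
    apply hx₀N
    have : x₀ ∈ H ⊓ N := h.symm ▸ hx₀H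
    exact this.2
  · -- normal in H
    intro h hh x hx
    rw [Subgroup.mem_inf] at hx ⊢
    exact ⟨H.mul_mem (H.mul_mem hh hx.1) (H.inv_mem hh), hNnorm.conj_mem x hx.2 h⟩
  · -- normalizer
    refine le_antisymm ?_ H.le_normalizer
    intro g hg
    have hg' : ∀ h : G, h ∈ H ↔ g * h * g⁻¹ ∈ H := Subgroup.mem_normalizer_iff.mp hg
    have h1 : (1 : G)⁻¹ * x₀ * 1 ∈ H := by
      simpa using hx₀H
    have h2 : (g⁻¹)⁻¹ * x₀ * g⁻¹ ∈ H := by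
      have : (g⁻¹)⁻¹ * x₀ * g⁻¹ = g * x₀ * g⁻¹ := by group
      rw [this]
      exact (hg' x₀).mp hx₀H
    have := key x₀ hx₀N 1 g⁻¹ h1 h2
    have e : (1 : G)⁻¹ * g⁻¹ = g⁻¹ := by group
    rw [e] at this
    simpa using H.inv_mem this
  · -- FW condition
    intro g hg x hxH hconj
    rw [Subgroup.mem_inf]
    refine ⟨hxH, ?_⟩
    by_contra hxN
    have h1 : (1 : G)⁻¹ * x * 1 ∈ H := by simpa using hxH
    have h2 : (g⁻¹)⁻¹ * x * g⁻¹ ∈ H := by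
      have : (g⁻¹)⁻¹ * x * g⁻¹ = g * x * g⁻¹ := by group
      rw [this]
      exact hconj
    have := key x hxN 1 g⁻¹ h1 h2
    have e : (1 : G)⁻¹ * g⁻¹ = g⁻¹ := by group
    rw [e] at this
    exact hg (by simpa using H.inv_mem this)
end

section
/- The groups S₃, A₄ and S₄ are (∗)-coverable: for each G ∈ {S₃, A₄, S₄} there exist proper subgroups H, K of G such that G = K ∪ ⋃_{g∈G} H^g. -/
open Equiv

instance altDec : DecidablePred (· ∈ alternatingGroup (Fin 4)) := fun x =>
  decidable_of_iff (Equiv.Perm.sign x = 1) Equiv.Perm.mem_alternatingGroup.symm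

/-- membership predicate for `s3H`. -/
def s3Hp (x : Perm (Fin 3)) : Prop := x = 1 ∨ x = c[0, 1]

instance : DecidablePred s3Hp := fun _ => by unfold s3Hp; infer_instance

/-- `H` for `S₃`: generated by a transposition. -/
def s3H : Subgroup (Perm (Fin 3)) where
  carrier := {x | s3Hp x}
  mul_mem' := by decide
  one_mem' := by decide
  inv_mem' := by decide

instance : DecidablePred (· ∈ s3H) := fun x => (inferInstance : Decidable (s3Hp x))

/-- membership predicate for `s3K`. -/
def s3Kp (x : Perm (Fin 3)) : Prop := x = 1 ∨ x = c[0, 1, 2] ∨ x = c[0, 2, 1]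

instance : DecidablePred s3Kp := fun _ => by unfold s3Kp; infer_instance

/-- `K` for `S₃`: the rotation subgroup `A₃`. -/
def s3K : Subgroup (Perm (Fin 3)) where
  carrier := {x | s3Kp x}
  mul_mem' := by decide
  one_mem' := by decide
  inv_mem' := by decide

instance : DecidablePred (· ∈ s3K) := fun x => (inferInstance : Decidable (s3Kp x))

/-- membership predicate for `a4H`. -/
def a4Hp (x : alternatingGroup (Fin 4)) : Prop :=
  (x : Perm (Fin 4)) = 1 ∨ (x : Perm (Fin 4)) = c[0, 1, 2] ∨ (x : Perm (Fin 4)) = c[0, 2, 1]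

instance : DecidablePred a4Hp := fun _ => by unfold a4Hp; infer_instance

/-- `H` for `A₄`: generated by a 3-cycle. -/
def a4H : Subgroup (alternatingGroup (Fin 4)) where
  carrier := {x | a4Hp x}
  mul_mem' := by decide
  one_mem' := by decide
  inv_mem' := by decide

instance : DecidablePred (· ∈ a4H) := fun x => (inferInstance : Decidable (a4Hp x))

/-- membership predicate for `a4K`. -/
def a4Kp (x : alternatingGroup (Fin 4)) : Prop :=
  (x : Perm (Fin 4)) = 1 ∨ (x : Perm (Fin 4)) = c[0, 1] * c[2, 3] ∨
    (x : Perm (Fin 4)) = c[0, 2] * c[1, 3] ∨ (x : Perm (Fin 4)) = c[0, 3] * c[1, 2]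

instance : DecidablePred a4Kp := fun _ => by unfold a4Kp; infer_instance

/-- `K` for `A₄`: the Klein four subgroup. -/
def a4K : Subgroup (alternatingGroup (Fin 4)) where
  carrier := {x | a4Kp x}
  mul_mem' := by decide
  one_mem' := by decide
  inv_mem' := by decide

instance : DecidablePred (· ∈ a4K) := fun x => (inferInstance : Decidable (a4Kp x))

/-- membership predicate for `s4H`. -/
def s4Hp (x : Perm (Fin 4)) : Prop :=
  x = 1 ∨ x = c[0, 1, 2, 3] ∨ x = c[0, 2] * c[1, 3] ∨ x = c[0, 3, 2, 1] ∨
    x = c[0, 2] ∨ x = c[1, 3] ∨ x = c[0, 1] * c[2, 3] ∨ x = c[0, 3] * c[1, 2]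

instance : DecidablePred s4Hp := fun _ => by unfold s4Hp; infer_instance

/-- `H` for `S₄`: a dihedral subgroup of order 8. -/
def s4H : Subgroup (Perm (Fin 4)) where
  carrier := {x | s4Hp x}
  mul_mem' := by decide
  one_mem' := by decide
  inv_mem' := by decide

instance : DecidablePred (· ∈ s4H) := fun x => (inferInstance : Decidable (s4Hp x))

/-- a double transposition in `A₄`. -/
def a4x : alternatingGroup (Fin 4) := ⟨c[0, 1] * c[2, 3], by decide⟩

/-- a 3-cycle in `A₄`. -/
def a4y : alternatingGroup (Fin 4) := ⟨c[0, 1, 2], by decide⟩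

/-- `S₃`, `A₄` and `S₄` are (∗)-coverable: each admits proper subgroups `H`, `K`
with `G = K ∪ ⋃_{g∈G} H^g`. -/
theorem stmt_7 :
    (∃ H K : Subgroup (Equiv.Perm (Fin 3)), H ≠ ⊤ ∧ K ≠ ⊤ ∧
        ∀ x : Equiv.Perm (Fin 3), x ∈ K ∨ ∃ g : Equiv.Perm (Fin 3), g * x * g⁻¹ ∈ H) ∧
    (∃ H K : Subgroup (alternatingGroup (Fin 4)), H ≠ ⊤ ∧ K ≠ ⊤ ∧
        ∀ x : alternatingGroup (Fin 4), x ∈ K ∨ ∃ g : alternatingGroup (Fin 4), g * x * g⁻¹ ∈ H) ∧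
    (∃ H K : Subgroup (Equiv.Perm (Fin 4)), H ≠ ⊤ ∧ K ≠ ⊤ ∧
        ∀ x : Equiv.Perm (Fin 4), x ∈ K ∨ ∃ g : Equiv.Perm (Fin 4), g * x * g⁻¹ ∈ H) := by
  have h1 : ¬ s3Hp c[0, 1, 2] := by decide
  have h2 : ¬ s3Kp c[0, 1] := by decide
  have h3 : ¬ a4Hp a4x := by decide
  have h4 : ¬ a4Kp a4y := by decide
  have h5 : ¬ s4Hp c[0, 1] := by decide
  have h6 : (c[0, 1] : Perm (Fin 4)) ∉ alternatingGroup (Fin 4) := by decide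
  refine ⟨⟨s3H, s3K, ?_, ?_, by decide⟩, ⟨a4H, a4K, ?_, ?_, by decide⟩,
    ⟨s4H, alternatingGroup (Fin 4), ?_, ?_, by decide⟩⟩
  · exact fun h => h1 ((Subgroup.eq_top_iff' _).mp h _)
  · exact fun h => h2 ((Subgroup.eq_top_iff' _).mp h _)
  · exact fun h => h3 ((Subgroup.eq_top_iff' _).mp h _)
  · exact fun h => h4 ((Subgroup.eq_top_iff' _).mp h _)
  · exact fun h => h5 ((Subgroup.eq_top_iff' _).mp h _)
  · exact fun h => h6 ((Subgroup.eq_top_iff' _).mp h (c[0, 1] : Perm (Fin 4)))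
end

section
/- Let G be a finite group with proper subgroups H, K such that G = (⋃_{g∈G} H^g) ∪ (⋃_{g∈G} K^g). If N is a normal subgroup of G with G = NH = NK, then N = (⋃_{x∈N} (H ∩ N)^x) ∪ (⋃_{x∈N} (K ∩ N)^x); in particular, since H ∩ N and K ∩ N are proper subgroups of N, the set {(H ∩ N)^x, (K ∩ N)^x : x ∈ N} is a covering of N. -/
/-- If `{H^g, K^g : g ∈ G}` covers the finite group `G` and `N ⊴ G` satisfies
`G = NH = NK`, then `{(H ∩ N)^x, (K ∩ N)^x : x ∈ N}` is a covering of `N`: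
`H ∩ N` and `K ∩ N` are proper in `N` and their `N`-conjugates cover `N`. -/
theorem stmt_11 {G : Type*} [Group G] [Finite G] (H K N : Subgroup G)
    (hH : H ≠ ⊤) (hK : K ≠ ⊤)
    (hcov : ∀ x : G, (∃ g : G, g * x * g⁻¹ ∈ H) ∨ (∃ g : G, g * x * g⁻¹ ∈ K))
    [N.Normal]
    (hNH : ∀ x : G, ∃ n ∈ N, ∃ h ∈ H, x = n * h)
    (hNK : ∀ x : G, ∃ n ∈ N, ∃ k ∈ K, x = n * k) :
    H ⊓ N < N ∧ K ⊓ N < N ∧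
      ∀ x ∈ N, (∃ y ∈ N, y * x * y⁻¹ ∈ H ⊓ N) ∨ (∃ y ∈ N, y * x * y⁻¹ ∈ K ⊓ N) := by
  have proper : ∀ (H' : Subgroup G), H' ≠ ⊤ →
      (∀ x : G, ∃ n ∈ N, ∃ h ∈ H', x = n * h) → H' ⊓ N < N := by
    intro H' hH' hNH'
    refine lt_of_le_of_ne inf_le_right ?_
    intro heq
    have hNle : N ≤ H' := by
      intro n hn
      have : n ∈ H' ⊓ N := by rw [heq]; exact hn
      exact this.1
    apply hH'
    rw [Subgroup.eq_top_iff']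
    intro x
    obtain ⟨n, hn, h, hh, rfl⟩ := hNH' x
    exact H'.mul_mem (hNle hn) hh
  have cover : ∀ (H' : Subgroup G), (∀ x : G, ∃ n ∈ N, ∃ h ∈ H', x = n * h) →
      ∀ x ∈ N, ∀ g : G, g * x * g⁻¹ ∈ H' → ∃ y ∈ N, y * x * y⁻¹ ∈ H' ⊓ N := by
    intro H' hNH' x hx g hg
    obtain ⟨n, hn, h, hh, hgn⟩ := hNH' g⁻¹
    refine ⟨n⁻¹, N.inv_mem hn, ?_, ?_⟩
    · have : n⁻¹ * x * n⁻¹⁻¹ = h * (g * x * g⁻¹) * h⁻¹ := by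
        have hgeq : g = h⁻¹ * n⁻¹ := by
          rw [← inv_inv g, hgn]; group
        rw [hgeq]; group
      rw [this]
      exact H'.mul_mem (H'.mul_mem hh hg) (H'.inv_mem hh)
    · exact N.mul_mem (N.mul_mem (N.inv_mem hn) hx) (N.inv_mem (N.inv_mem hn))
  refine ⟨proper H hH hNH, proper K hK hNK, fun x hx => ?_⟩
  rcases hcov x with ⟨g, hg⟩ | ⟨g, hg⟩
  · exact Or.inl (cover H hNH x hx g hg)
  · exact Or.inr (cover K hNK x hx g hg)
end

section
/- S₅ and S₆ are (∗∗)-coverable groups: for each G ∈ {S₅, S₆} there exist proper subgroups H, K of G such that G = (⋃_{g∈G} H^g) ∪ (⋃_{g∈G} K^g). -/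
set_option maxRecDepth 20000

namespace Stmt12Aux
open Equiv
open Fin.CommRing

theorem Perm.apply_inv_self {α : Type*} (f : Equiv.Perm α) (x : α) : f (f⁻¹ x) = x :=
  f.apply_symm_apply x
theorem Perm.inv_apply_self {α : Type*} (f : Equiv.Perm α) (x : α) : f⁻¹ (f x) = x :=
  f.symm_apply_apply x

def mk5 (v w : Fin 5 → Fin 5) (h1 : ∀ x, w (v x) = x) (h2 : ∀ x, v (w x) = x) : Perm (Fin 5) :=
  ⟨v, w, h1, h2⟩
def mk6 (v w : Fin 6 → Fin 6) (h1 : ∀ x, w (v x) = x) (h2 : ∀ x, v (w x) = x) : Perm (Fin 6) :=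
  ⟨v, w, h1, h2⟩

def σ5 : Perm (Fin 5) := mk5 ![1,2,0,4,3] ![2,0,1,4,3] (by decide) (by decide)
def t6 : Perm (Fin 6) := mk6 ![3,4,5,0,1,2] ![3,4,5,0,1,2] (by decide) (by decide)

/-- the affine group of `ZMod 5 = Fin 5`, i.e. a Frobenius group `F₂₀` -/
def H5 : Subgroup (Perm (Fin 5)) where
  carrier := {g | ∃ a b : Fin 5, ∀ x, g x = a * x + b}
  one_mem' := ⟨1, 0, fun x => by simp⟩
  mul_mem' := by
    rintro p q ⟨a1, b1, h1⟩ ⟨a2, b2, h2⟩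
    refine ⟨a1 * a2, a1 * b2 + b1, fun x => ?_⟩
    simp only [Perm.mul_apply, h1, h2]; ring
  inv_mem' := by
    rintro g ⟨a, b, h⟩
    have ha : a ≠ 0 := by
      intro h0
      have h01 : g 0 = g 1 := by rw [h 0, h 1, h0]; ring
      exact absurd (g.injective h01) (by decide)
    have key : ∀ a : Fin 5, a ≠ 0 → ∃ c, a * c = 1 := by decide
    obtain ⟨c, hc⟩ := key a ha
    refine ⟨c, -(c * b), fun y => ?_⟩
    apply g.injective
    rw [Perm.apply_inv_self, h]
    linear_combination (b - y) * hc

/-- centralizer of `(0 1 2)(3 4)` -/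
def K5 : Subgroup (Perm (Fin 5)) where
  carrier := {g | ∀ x, g (σ5 x) = σ5 (g x)}
  one_mem' := fun _ => rfl
  mul_mem' := by
    intro p q hp hq x
    have hp' : ∀ y, p _ = _ := hp
    have hq' : ∀ y, q _ = _ := hq
    simp only [Perm.mul_apply, hq', hp']
  inv_mem' := by
    intro g hg x
    apply g.injective
    rw [Perm.apply_inv_self, hg, Perm.apply_inv_self]

/-- stabilizer of `0` -/
def H6 : Subgroup (Perm (Fin 6)) where
  carrier := {g | g 0 = 0}
  one_mem' := rfl
  mul_mem' := by
    intro p q hp hq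
    show p (q 0) = 0
    rw [hq, hp]
  inv_mem' := by
    intro g hg
    apply g.injective
    rw [Perm.apply_inv_self, hg]

/-- centralizer of `(0 3)(1 4)(2 5)` -/
def K6 : Subgroup (Perm (Fin 6)) where
  carrier := {g | ∀ x, g (t6 x) = t6 (g x)}
  one_mem' := fun _ => rfl
  mul_mem' := by
    intro p q hp hq x
    have hp' : ∀ y, p _ = _ := hp
    have hq' : ∀ y, q _ = _ := hq
    simp only [Perm.mul_apply, hq', hp']
  inv_mem' := by
    intro g hg x
    apply g.injective
    rw [Perm.apply_inv_self, hg, Perm.apply_inv_self]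

instance : DecidablePred (· ∈ H5) :=
  fun g => decidable_of_iff (∀ x : Fin 5, g x = (g 1 - g 0) * x + g 0)
    ⟨fun h => ⟨g 1 - g 0, g 0, h⟩, fun ⟨a, b, h⟩ x => by rw [h x, h 1, h 0]; ring⟩
instance : DecidablePred (· ∈ K5) :=
  fun g => inferInstanceAs (Decidable (∀ x, g (σ5 x) = σ5 (g x)))
instance : DecidablePred (· ∈ H6) :=
  fun g => inferInstanceAs (Decidable (g 0 = 0))
instance : DecidablePred (· ∈ K6) :=
  fun g => inferInstanceAs (Decidable (∀ x, g (t6 x) = t6 (g x)))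

def LH5 : List (Perm (Fin 5)) :=
  [mk5 ![0,1,2,3,4] ![0,1,2,3,4] (by decide) (by decide),
   mk5 ![0,1,2,4,3] ![0,1,2,4,3] (by decide) (by decide),
   mk5 ![0,1,3,2,4] ![0,1,3,2,4] (by decide) (by decide),
   mk5 ![0,1,3,4,2] ![0,1,4,2,3] (by decide) (by decide),
   mk5 ![0,1,4,2,3] ![0,1,3,4,2] (by decide) (by decide),
   mk5 ![0,1,4,3,2] ![0,1,4,3,2] (by decide) (by decide) ]

def LK5 : List (Perm (Fin 5) × Perm (Fin 5)) :=
  [(mk5 ![0,3,4,2,1] ![0,4,3,1,2] (by decide) (by decide), mk5 ![4,2,1,0,3] ![3,2,1,4,0] (by decide) (by decide)),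
   (mk5 ![0,2,3,1,4] ![0,3,1,2,4] (by decide) (by decide), mk5 ![3,0,4,1,2] ![1,3,4,0,2] (by decide) (by decide)),
   (mk5 ![0,1,3,4,2] ![0,1,4,2,3] (by decide) (by decide), mk5 ![1,4,3,2,0] ![4,0,3,2,1] (by decide) (by decide)),
   (mk5 ![3,0,2,1,4] ![1,3,2,0,4] (by decide) (by decide), mk5 ![4,3,1,2,0] ![4,2,3,1,0] (by decide) (by decide)),
   (mk5 ![0,3,1,2,4] ![0,2,3,1,4] (by decide) (by decide), mk5 ![2,4,3,0,1] ![3,4,0,2,1] (by decide) (by decide)),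
   (mk5 ![0,3,1,4,2] ![0,2,4,1,3] (by decide) (by decide), mk5 ![2,3,4,1,0] ![4,3,0,1,2] (by decide) (by decide)),
   (mk5 ![3,0,4,2,1] ![1,4,3,0,2] (by decide) (by decide), mk5 ![2,4,0,1,3] ![2,3,0,4,1] (by decide) (by decide)),
   (mk5 ![0,2,1,3,4] ![0,2,1,3,4] (by decide) (by decide), mk5 ![2,0,1,4,3] ![1,2,0,4,3] (by decide) (by decide)),
   (mk5 ![3,0,1,4,2] ![1,2,4,0,3] (by decide) (by decide), mk5 ![3,2,4,0,1] ![3,4,1,0,2] (by decide) (by decide)),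
   (mk5 ![3,4,0,2,1] ![2,4,3,0,1] (by decide) (by decide), mk5 ![1,0,4,2,3] ![1,0,3,4,2] (by decide) (by decide)) ]

def LH6 : List (Perm (Fin 6) × Fin 6) :=
  [(mk6 ![0,1,2,3,4,5] ![0,1,2,3,4,5] (by decide) (by decide), 0),
   (mk6 ![1,0,2,3,4,5] ![1,0,2,3,4,5] (by decide) (by decide), 1),
   (mk6 ![2,1,0,3,4,5] ![2,1,0,3,4,5] (by decide) (by decide), 2),
   (mk6 ![3,1,2,0,4,5] ![3,1,2,0,4,5] (by decide) (by decide), 3),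
   (mk6 ![4,1,2,3,0,5] ![4,1,2,3,0,5] (by decide) (by decide), 4),
   (mk6 ![5,1,2,3,4,0] ![5,1,2,3,4,0] (by decide) (by decide), 5) ]

def LK6 : List (Perm (Fin 6) × Perm (Fin 6)) :=
  [(mk6 ![0,1,2,5,4,3] ![0,1,2,5,4,3] (by decide) (by decide), mk6 ![5,4,3,2,1,0] ![5,4,3,2,1,0] (by decide) (by decide)),
   (mk6 ![0,1,2,4,5,3] ![0,1,2,5,3,4] (by decide) (by decide), mk6 ![5,3,4,1,2,0] ![5,3,4,1,2,0] (by decide) (by decide)),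
   (mk6 ![0,1,4,2,5,3] ![0,1,3,5,2,4] (by decide) (by decide), mk6 ![5,2,1,4,3,0] ![5,2,1,4,3,0] (by decide) (by decide)),
   (mk6 ![0,1,2,3,4,5] ![0,1,2,3,4,5] (by decide) (by decide), mk6 ![3,4,5,0,1,2] ![3,4,5,0,1,2] (by decide) (by decide)),
   (mk6 ![0,1,3,2,4,5] ![0,1,3,2,4,5] (by decide) (by decide), mk6 ![2,4,0,5,1,3] ![2,4,0,5,1,3] (by decide) (by decide)),
   (mk6 ![0,3,1,4,2,5] ![0,2,4,1,3,5] (by decide) (by decide), mk6 ![1,0,3,2,5,4] ![1,0,3,2,5,4] (by decide) (by decide)),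
   (mk6 ![0,1,2,5,3,4] ![0,1,2,4,5,3] (by decide) (by decide), mk6 ![4,5,3,2,0,1] ![4,5,3,2,0,1] (by decide) (by decide)),
   (mk6 ![0,1,4,2,3,5] ![0,1,3,4,2,5] (by decide) (by decide), mk6 ![4,2,1,5,0,3] ![4,2,1,5,0,3] (by decide) (by decide)),
   (mk6 ![0,1,4,3,2,5] ![0,1,4,3,2,5] (by decide) (by decide), mk6 ![3,2,1,0,5,4] ![3,2,1,0,5,4] (by decide) (by decide)),
   (mk6 ![0,3,1,2,4,5] ![0,2,3,1,4,5] (by decide) (by decide), mk6 ![1,0,4,5,2,3] ![1,0,4,5,2,3] (by decide) (by decide)),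
   (mk6 ![0,3,1,2,5,4] ![0,2,3,1,5,4] (by decide) (by decide), mk6 ![1,0,5,4,3,2] ![1,0,5,4,3,2] (by decide) (by decide)),
   (mk6 ![0,1,2,3,5,4] ![0,1,2,3,5,4] (by decide) (by decide), mk6 ![3,5,4,0,2,1] ![3,5,4,0,2,1] (by decide) (by decide)),
   (mk6 ![0,1,3,4,2,5] ![0,1,4,2,3,5] (by decide) (by decide), mk6 ![2,3,0,1,5,4] ![2,3,0,1,5,4] (by decide) (by decide)),
   (mk6 ![0,1,3,2,5,4] ![0,1,3,2,5,4] (by decide) (by decide), mk6 ![2,5,0,4,3,1] ![2,5,0,4,3,1] (by decide) (by decide)),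
   (mk6 ![0,1,2,4,3,5] ![0,1,2,4,3,5] (by decide) (by decide), mk6 ![4,3,5,1,0,2] ![4,3,5,1,0,2] (by decide) (by decide)) ]


/-- if `x` commutes with `s = g⁻¹ t g`, then `g x g⁻¹` commutes with `t` (pointwise form) -/
lemma bridge_comm {n : ℕ} (t g x s : Perm (Fin n)) (hs : g * s = t * g)
    (hc : ∀ y, x (s y) = s (x y)) : ∀ z, (g * x * g⁻¹) (t z) = t ((g * x * g⁻¹) z) := by
  have hs' : ∀ y, g (s y) = t (g y) := fun y => by
    have := congrArg (fun p : Perm (Fin n) => p y) hs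
    simpa [Perm.mul_apply] using this
  intro z
  show g (x (g⁻¹ (t z))) = t (g (x (g⁻¹ z)))
  have h1 : g⁻¹ (t z) = s (g⁻¹ z) := by
    apply g.injective
    rw [Perm.apply_inv_self, hs', Perm.apply_inv_self]
  rw [h1, hc, hs']

lemma bridge_fix (g x : Perm (Fin 6)) (c : Fin 6) (h1 : g c = 0) (h2 : x c = c) :
    g * x * g⁻¹ ∈ H6 := by
  show g (x (g⁻¹ 0)) = 0
  rw [← h1, Perm.inv_apply_self, h2]

lemma LH6_spec : ∀ i : Fin LH6.length, (LH6.get i).1 (LH6.get i).2 = 0 := by decide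
lemma LK6_spec : ∀ i : Fin LK6.length, (LK6.get i).1 * (LK6.get i).2 = t6 * (LK6.get i).1 := by
  decide
lemma LK5_spec : ∀ i : Fin LK5.length, (LK5.get i).1 * (LK5.get i).2 = σ5 * (LK5.get i).1 := by
  decide

set_option maxHeartbeats 4000000 in
lemma cover5 : ∀ x : Perm (Fin 5),
    (∃ i : Fin LH5.length, LH5.get i * x * (LH5.get i)⁻¹ ∈ H5) ∨
      (∃ i : Fin LK5.length, ∀ y, x ((LK5.get i).2 y) = (LK5.get i).2 (x y)) := by
  decide

set_option maxHeartbeats 4000000 in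
lemma cover6 : ∀ x : Perm (Fin 6),
    (∃ i : Fin LH6.length, x (LH6.get i).2 = (LH6.get i).2) ∨
      (∃ i : Fin LK6.length, ∀ y, x ((LK6.get i).2 y) = (LK6.get i).2 (x y)) := by
  decide

lemma H5_ne_top : H5 ≠ ⊤ := fun h =>
  absurd ((Subgroup.eq_top_iff' H5).mp h (Equiv.swap 0 1)) (by decide)
lemma K5_ne_top : K5 ≠ ⊤ := fun h =>
  absurd ((Subgroup.eq_top_iff' K5).mp h (Equiv.swap 0 1)) (by decide)
lemma H6_ne_top : H6 ≠ ⊤ := fun h =>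
  absurd ((Subgroup.eq_top_iff' H6).mp h (Equiv.swap 0 1)) (by decide)
lemma K6_ne_top : K6 ≠ ⊤ := fun h =>
  absurd ((Subgroup.eq_top_iff' K6).mp h (Equiv.swap 0 1)) (by decide)

end Stmt12Aux

open Stmt12Aux in
/-- `S₅` and `S₆` are (∗∗)-coverable: each admits proper subgroups `H`, `K` such that
`G = (⋃_{g∈G} H^g) ∪ (⋃_{g∈G} K^g)`. -/
theorem stmt_12 :
    (∃ H K : Subgroup (Equiv.Perm (Fin 5)), H ≠ ⊤ ∧ K ≠ ⊤ ∧
        ∀ x : Equiv.Perm (Fin 5),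
          (∃ g : Equiv.Perm (Fin 5), g * x * g⁻¹ ∈ H) ∨
            (∃ g : Equiv.Perm (Fin 5), g * x * g⁻¹ ∈ K)) ∧
    (∃ H K : Subgroup (Equiv.Perm (Fin 6)), H ≠ ⊤ ∧ K ≠ ⊤ ∧
        ∀ x : Equiv.Perm (Fin 6),
          (∃ g : Equiv.Perm (Fin 6), g * x * g⁻¹ ∈ H) ∨
            (∃ g : Equiv.Perm (Fin 6), g * x * g⁻¹ ∈ K)) := by
  constructor
  · refine ⟨H5, K5, H5_ne_top, K5_ne_top, fun x => ?_⟩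
    rcases cover5 x with ⟨i, h⟩ | ⟨i, h⟩
    · exact Or.inl ⟨LH5.get i, h⟩
    · exact Or.inr ⟨(LK5.get i).1,
        bridge_comm σ5 (LK5.get i).1 x (LK5.get i).2 (LK5_spec i) h⟩
  · refine ⟨H6, K6, H6_ne_top, K6_ne_top, fun x => ?_⟩
    rcases cover6 x with ⟨i, h⟩ | ⟨i, h⟩
    · exact Or.inl ⟨(LH6.get i).1, bridge_fix (LH6.get i).1 x (LH6.get i).2 (LH6_spec i) h⟩
    · exact Or.inr ⟨(LK6.get i).1,
        bridge_comm t6 (LK6.get i).1 x (LK6.get i).2 (LK6_spec i) h⟩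
end

section
/- Let n ≥ 5 and let H, K be proper subgroups of Aₙ such that Aₙ = (⋃_{g∈Aₙ} H^g) ∪ (⋃_{g∈Aₙ} K^g). Then at least one of H and K acts transitively on {1, …, n}. -/
open Equiv Equiv.Perm Finset

open Fin.NatCast in
private lemma stmt15_rot_inv {m : ℕ} (s : Finset (Fin m)) (hs : ∀ i ∈ s, finRotate m i ∈ s) :
    s = ∅ ∨ s = Finset.univ := by
  match m with
  | 0 => left; exact Finset.eq_empty_of_forall_notMem (fun i _ => i.elim0)
  | m + 1 =>
    rcases s.eq_empty_or_nonempty with h | ⟨a, ha⟩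
    · exact Or.inl h
    right
    have key : ∀ j : ℕ, a + (j : Fin (m+1)) ∈ s := by
      intro j
      induction j with
      | zero => simpa using ha
      | succ j ih =>
        have := hs _ ih
        rw [finRotate_succ_apply] at this
        have hc : ((j+1 : ℕ) : Fin (m+1)) = (j : Fin (m+1)) + 1 := by push_cast; ring
        rw [hc, ← add_assoc]
        exact this
    apply Finset.eq_univ_of_forall
    intro b
    have := key ((b - a : Fin (m+1)).val)
    rwa [Fin.cast_val_eq_self, add_sub_cancel] at this

private lemma stmt15_sum_inv {k m : ℕ} (s : Finset (Fin k ⊕ Fin m))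
    (hs : ∀ i ∈ s, Equiv.sumCongr (finRotate k) (finRotate m) i ∈ s) :
    s.card = 0 ∨ s.card = k ∨ s.card = m ∨ s.card = k + m := by
  classical
  set s₁ : Finset (Fin k) := Finset.univ.filter (fun i => Sum.inl i ∈ s) with hs₁
  set s₂ : Finset (Fin m) := Finset.univ.filter (fun i => Sum.inr i ∈ s) with hs₂
  have h₁ : s₁ = ∅ ∨ s₁ = Finset.univ := by
    apply stmt15_rot_inv
    intro i hi
    simp only [hs₁, Finset.mem_filter, Finset.mem_univ, true_and] at hi ⊢
    simpa using hs _ hi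
  have h₂ : s₂ = ∅ ∨ s₂ = Finset.univ := by
    apply stmt15_rot_inv
    intro i hi
    simp only [hs₂, Finset.mem_filter, Finset.mem_univ, true_and] at hi ⊢
    simpa using hs _ hi
  have hdec : s = s₁.map ⟨Sum.inl, Sum.inl_injective⟩ ∪ s₂.map ⟨Sum.inr, Sum.inr_injective⟩ := by
    ext x
    cases x <;> simp [hs₁, hs₂]
  have hdisj : Disjoint (s₁.map ⟨Sum.inl, Sum.inl_injective⟩)
      (s₂.map ⟨Sum.inr, Sum.inr_injective⟩) := by
    simp [Finset.disjoint_left]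
  have hcard : s.card = s₁.card + s₂.card := by
    rw [hdec, Finset.card_union_of_disjoint hdisj, Finset.card_map, Finset.card_map]
  rcases h₁ with h1 | h1 <;> rcases h₂ with h2 | h2 <;>
    simp [hcard, h1, h2, Finset.card_univ]

/-- the special permutation: product of a `k`-cycle and an `m`-cycle -/
private def stmt15_specPerm (k m n : ℕ) (h : k + m = n) : Equiv.Perm (Fin n) :=
  ((finSumFinEquiv.trans (finCongr h)).permCongr
    (Equiv.sumCongr (finRotate k) (finRotate m)))

private lemma stmt15_sign_finRotate (k : ℕ) :
    Equiv.Perm.sign (finRotate k) = (-1 : ℤˣ) ^ (k - 1) := by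
  match k with
  | 0 => simp [finRotate]
  | k + 1 => simp [sign_finRotate]

private lemma stmt15_specPerm_sign (k m n : ℕ) (h : k + m = n) :
    Equiv.Perm.sign (stmt15_specPerm k m n h) = (-1 : ℤˣ) ^ (k - 1) * (-1) ^ (m - 1) := by
  rw [stmt15_specPerm, Equiv.Perm.sign_permCongr, Equiv.Perm.sign_sumCongr,
    stmt15_sign_finRotate, stmt15_sign_finRotate]

private lemma stmt15_specPerm_card (k m n : ℕ) (h : k + m = n) (t : Finset (Fin n))
    (ht : ∀ i ∈ t, stmt15_specPerm k m n h i ∈ t) :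
    t.card = 0 ∨ t.card = k ∨ t.card = m ∨ t.card = n := by
  classical
  set e : Fin k ⊕ Fin m ≃ Fin n := finSumFinEquiv.trans (finCongr h) with he
  set s : Finset (Fin k ⊕ Fin m) := t.image e.symm with hsdef
  have hcard : s.card = t.card := Finset.card_image_of_injective _ e.symm.injective
  have hmem : ∀ x, x ∈ s ↔ e x ∈ t := by
    intro x
    simp only [hsdef, Finset.mem_image]
    constructor
    · rintro ⟨y, hy, rfl⟩; simpa using hy
    · intro hx; exact ⟨e x, hx, by simp⟩
  have := stmt15_sum_inv s (fun i hi => by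
    rw [hmem] at hi ⊢
    have : stmt15_specPerm k m n h (e i) ∈ t := ht _ hi
    rwa [stmt15_specPerm, Equiv.permCongr_apply, Equiv.symm_apply_apply] at this)
  rw [hcard] at this
  exact h ▸ this

private lemma stmt15_cover_invariant (n : ℕ) (H : Subgroup (alternatingGroup (Fin n)))
    (i j : Fin n) (hij : ∀ σ ∈ H, (σ : Equiv.Perm (Fin n)) i ≠ j) :
    ∃ a : ℕ, 1 ≤ a ∧ a + 1 ≤ n ∧
      ∀ x g : alternatingGroup (Fin n), g * x * g⁻¹ ∈ H →
        ∃ t : Finset (Fin n), t.card = a ∧ ∀ p ∈ t, (x : Equiv.Perm (Fin n)) p ∈ t := by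
  classical
  set sA : Finset (Fin n) :=
    Finset.univ.filter (fun p => ∃ σ ∈ H, (σ : Equiv.Perm (Fin n)) i = p) with hsA
  have hi : i ∈ sA := by
    simp only [hsA, Finset.mem_filter, Finset.mem_univ, true_and]
    exact ⟨1, H.one_mem, by simp⟩
  have hj : j ∉ sA := by
    simp only [hsA, Finset.mem_filter, Finset.mem_univ, true_and]
    rintro ⟨σ, hσ, hσi⟩
    exact hij σ hσ hσi
  have hHs : ∀ h' ∈ H, ∀ q ∈ sA,
      ((h' : alternatingGroup (Fin n)) : Equiv.Perm (Fin n)) q ∈ sA := by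
    intro h' hh' q hq
    simp only [hsA, Finset.mem_filter, Finset.mem_univ, true_and] at hq ⊢
    obtain ⟨σ, hσ, rfl⟩ := hq
    exact ⟨h' * σ, H.mul_mem hh' hσ, by simp⟩
  refine ⟨sA.card, Finset.card_pos.mpr ⟨i, hi⟩, ?_, ?_⟩
  · have h1 : sA ⊂ Finset.univ := Finset.ssubset_univ_iff.mpr (fun h => hj (h ▸ Finset.mem_univ j))
    have := Finset.card_lt_card h1
    simp only [Finset.card_univ, Fintype.card_fin] at this
    omega
  · intro x g hg
    refine ⟨sA.image ((g⁻¹ : alternatingGroup (Fin n)) : Equiv.Perm (Fin n)),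
      Finset.card_image_of_injective _ (Equiv.injective _), ?_⟩
    intro p hp
    obtain ⟨q, hq, rfl⟩ := Finset.mem_image.mp hp
    have hq' := hHs _ hg q hq
    apply Finset.mem_image.mpr
    refine ⟨((g * x * g⁻¹ : alternatingGroup (Fin n)) : Equiv.Perm (Fin n)) q, hq', ?_⟩
    simp [Equiv.Perm.mul_apply]

/-- If `n ≥ 5` and `H`, `K` are proper subgroups of `Aₙ` whose conjugates cover `Aₙ`,
then at least one of `H`, `K` is transitive on `{1,…,n}`. -/
theorem stmt_15 (n : ℕ) (hn : 5 ≤ n)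
    (H K : Subgroup (alternatingGroup (Fin n)))
    (hH : H ≠ ⊤) (hK : K ≠ ⊤)
    (hcov : ∀ x : alternatingGroup (Fin n),
      (∃ g : alternatingGroup (Fin n), g * x * g⁻¹ ∈ H) ∨
        (∃ g : alternatingGroup (Fin n), g * x * g⁻¹ ∈ K)) :
    (∀ i j : Fin n, ∃ σ ∈ H, (σ : Equiv.Perm (Fin n)) i = j) ∨
      (∀ i j : Fin n, ∃ σ ∈ K, (σ : Equiv.Perm (Fin n)) i = j) := by
  classical
  by_contra hcon
  push_neg at hcon
  obtain ⟨h1, h2⟩ := hcon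
  obtain ⟨i₁, j₁, hij1⟩ := h1
  obtain ⟨i₂, j₂, hij2⟩ := h2
  obtain ⟨a, ha1, ha2, hA⟩ := stmt15_cover_invariant n H i₁ j₁ hij1
  obtain ⟨b, hb1, hb2, hB⟩ := stmt15_cover_invariant n K i₂ j₂ hij2
  obtain ⟨k, m, hkm, hsign, hka, hma, hkb, hmb⟩ :
      ∃ k m : ℕ, k + m = n ∧ ((-1:ℤˣ)^(k-1) * (-1)^(m-1) = 1) ∧
        k ≠ a ∧ m ≠ a ∧ k ≠ b ∧ m ≠ b := by
    rcases Nat.even_or_odd n with hev | hod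
    · obtain ⟨c, hc⟩ := hev
      have hne : ((Finset.Icc 1 (n-1)) \ {a, n-a, b, n-b} : Finset ℕ).Nonempty := by
        rw [← Finset.card_pos]
        have hc1 : (Finset.Icc 1 (n-1)).card = n - 1 := by
          rw [Nat.card_Icc]; omega
        have hc2 : ({a, n-a, b, n-b} : Finset ℕ).card ≤ 4 := by
          apply le_trans (Finset.card_insert_le _ _)
          apply Nat.succ_le_succ
          apply le_trans (Finset.card_insert_le _ _)
          apply Nat.succ_le_succ
          apply le_trans (Finset.card_insert_le _ _)
          apply Nat.succ_le_succ
          simp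
        have := Finset.le_card_sdiff ({a, n-a, b, n-b} : Finset ℕ) (Finset.Icc 1 (n-1))
        omega
      obtain ⟨k, hk⟩ := hne
      simp only [Finset.mem_sdiff, Finset.mem_Icc, Finset.mem_insert,
        Finset.mem_singleton, not_or] at hk
      obtain ⟨⟨hk1, hk2⟩, hka', hkna, hkb', hknb⟩ := hk
      refine ⟨k, n - k, by omega, ?_, hka', by omega, hkb', by omega⟩
      rw [← pow_add]
      exact Even.neg_one_pow ⟨c - 1, by omega⟩
    · obtain ⟨c, hc⟩ := hod
      refine ⟨n, 0, by omega, ?_, by omega, by omega, by omega, by omega⟩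
      norm_num
      exact Even.neg_one_pow ⟨c, by omega⟩
  set π := stmt15_specPerm k m n hkm with hπdef
  have hπ : π ∈ alternatingGroup (Fin n) := by
    rw [Equiv.Perm.mem_alternatingGroup, hπdef, stmt15_specPerm_sign]
    exact hsign
  rcases hcov ⟨π, hπ⟩ with ⟨g, hg⟩ | ⟨g, hg⟩
  · obtain ⟨t, htc, hti⟩ := hA ⟨π, hπ⟩ g hg
    have := stmt15_specPerm_card k m n hkm t hti
    omega
  · obtain ⟨t, htc, hti⟩ := hB ⟨π, hπ⟩ g hg
    have := stmt15_specPerm_card k m n hkm t hti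
    omega
end
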